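/- Fix integers n_2, δ, and a prime power q with primitive element structure as follows: let α_1,...,α_{n_2} be distinct elements of F_q and λ_1,...,λ_{t_2} elements of F_q^* in distinct cosets of a subgroup G ≤ F_q^* containing all α_i. For any two groups l' ≠ l'' and any choice of δ+1 indices j'_1,...,j'_{δ+1} in group l' and δ+1 indices j''_1,...,j''_{δ+1} in group l'', the (2δ+2)×(2δ+2) matrix consisting of: the δ Vandermonde rows (α_{j'_i}^m)_{m=1..δ} on the first block and zeros on the second, the δ Vandermonde rows on the second block and zeros on the first, the row (λ_{l'},...,λ_{l'}, λ_{l''},...,λ_{l''}), and the row (α_{j'_i}^{δ+1}, ..., α_{j''_i}^{δ+1}), is invertible. -/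

import Mathlib

open Polynomial Finset

namespace TGV

variable {F : Type*} [Field F]

lemma coeff_P (δ : ℕ) (c : ℕ → F) (c2 c3 : F) (m : ℕ) :
    (C c2 + ∑ p ∈ range δ, C (c p) * X^(p+1) + C c3 * X^(δ+1)).coeff m
      = (if m = 0 then c2 else 0)
        + (∑ p ∈ range δ, if m = p+1 then c p else 0)
        + (if m = δ+1 then c3 else 0) := by
  simp only [coeff_add, finset_sum_coeff, coeff_C_mul, coeff_X_pow, coeff_C]
  congr 1
  · congr 1
    exact Finset.sum_congr rfl fun p _ => by split <;> simp
  · split <;> simp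

lemma coeff_P_zero (δ : ℕ) (c : ℕ → F) (c2 c3 : F) :
    (C c2 + ∑ p ∈ range δ, C (c p) * X^(p+1) + C c3 * X^(δ+1)).coeff 0 = c2 := by
  rw [coeff_P]
  rw [Finset.sum_eq_zero (fun p _ => by simp)]
  simp

lemma coeff_P_succ (δ : ℕ) (c : ℕ → F) (c2 c3 : F) {k : ℕ} (hk : k < δ) :
    (C c2 + ∑ p ∈ range δ, C (c p) * X^(p+1) + C c3 * X^(δ+1)).coeff (k+1) = c k := by
  rw [coeff_P]
  rw [Finset.sum_eq_single k (fun p _ hpk => by simp [show ¬(k+1 = p+1) from fun h => hpk (by omega), show ¬(k = p) from fun h => hpk h.symm])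
    (fun h => absurd (Finset.mem_range.mpr hk) h)]
  have h2 : ¬ (k+1 = δ+1) := by omega
  simp [h2, show ¬ (k = δ) by omega]

lemma coeff_P_top (δ : ℕ) (c : ℕ → F) (c2 c3 : F) {m : ℕ} (hm : δ + 1 ≤ m) :
    (C c2 + ∑ p ∈ range δ, C (c p) * X^(p+1) + C c3 * X^(δ+1)).coeff m
      = if m = δ+1 then c3 else 0 := by
  rw [coeff_P]
  have h0 : ¬ (m = 0) := by omega
  rw [Finset.sum_eq_zero (fun p hp => by
    simp only [Finset.mem_range] at hp
    simp [show ¬ (m = p + 1) by omega])]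
  simp [h0]

/-- Key factorization: a polynomial of shape `C c2 + ∑ C (c p) X^(p+1) + C c3 X^(δ+1)`
vanishing at `δ+1` distinct points equals `C c3 * ∏ (X - C (x i))`. -/
lemma key (δ : ℕ) (x : Fin (δ+1) → F) (hx : Function.Injective x) (c : ℕ → F) (c2 c3 : F)
    (heval : ∀ i, Polynomial.eval (x i)
      (C c2 + ∑ p ∈ range δ, C (c p) * X^(p+1) + C c3 * X^(δ+1)) = 0) :
    (C c2 + ∑ p ∈ range δ, C (c p) * X^(p+1) + C c3 * X^(δ+1))
      = C c3 * ∏ i, (X - C (x i)) := by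
  set P : F[X] := C c2 + ∑ p ∈ range δ, C (c p) * X^(p+1) + C c3 * X^(δ+1) with hP
  set Pr : F[X] := ∏ i, (X - C (x i)) with hPr
  have hPrm : Pr.Monic := monic_prod_of_monic _ _ fun i _ => monic_X_sub_C _
  have hPrdeg : Pr.natDegree = δ + 1 := by
    rw [hPr, natDegree_prod_of_monic _ _ fun i _ => monic_X_sub_C _]
    simp [natDegree_X_sub_C]
  have hR : P - C c3 * Pr = 0 := by
    apply eq_zero_of_natDegree_lt_card_of_eval_eq_zero _ hx
    · intro i
      have hPri : Pr.eval (x i) = 0 := by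
        rw [hPr, eval_prod]
        exact Finset.prod_eq_zero (Finset.mem_univ i) (by simp)
      simp [heval i, hPri]
    · refine lt_of_le_of_lt ?_ (by simp : δ < Fintype.card (Fin (δ+1)))
      rw [natDegree_le_iff_coeff_eq_zero]
      intro m hm
      have hm' : δ + 1 ≤ m := hm
      rw [coeff_sub, coeff_P_top δ c c2 c3 hm', coeff_C_mul]
      rcases eq_or_lt_of_le hm' with h | h
      · rw [← h, if_pos rfl]
        have : Pr.coeff (δ+1) = 1 := by rw [← hPrdeg]; exact hPrm.coeff_natDegree
        rw [this, mul_one, sub_self]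
      · rw [if_neg (by omega), coeff_eq_zero_of_natDegree_lt (by omega), mul_zero, sub_zero]
  exact sub_eq_zero.mp hR

end TGV

namespace TGV2
open TGV

lemma sum_split {F : Type*} [AddCommMonoid F] (δ : ℕ) (g : ℕ → F) :
    ∑ p : Fin (2*δ+2), g p.val
      = (∑ p ∈ range δ, g p) + (∑ p ∈ range δ, g (δ+p)) + g (2*δ) + g (2*δ+1) := by
  rw [Fin.sum_univ_eq_sum_range g, Finset.sum_range_succ, Finset.sum_range_succ]
  congr 2
  rw [Finset.range_eq_Ico, ← Finset.sum_Ico_consecutive g (Nat.zero_le δ) (by omega : δ ≤ 2*δ)]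
  have h3 : ∑ i ∈ Ico δ (2*δ), g i = ∑ p ∈ range δ, g (δ+p) := by
    rw [Finset.sum_Ico_eq_sum_range, show 2*δ - δ = δ by omega]
  rw [h3, ← Finset.range_eq_Ico]

end TGV2

open Matrix Polynomial Finset TGV TGV2

set_option maxHeartbeats 1000000 in
/-- **Invertibility of the two-group Vandermonde/coset matrix.** Let `G ≤ F_qˣ`, let
`x 1, …, x (δ+1)` and `y 1, …, y (δ+1)` be (within each list distinct) elements of `G`
(the selected `α`'s of the two local groups), and let `λ, λ'` lie in distinct cosets of
`G`. Then the `(2δ+2) × (2δ+2)` matrix consisting of the `δ` Vandermonde rows on the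
first block (zero on the second), the `δ` Vandermonde rows on the second block (zero on
the first), the row `(λ,…,λ,λ',…,λ')` and the row of `(δ+1)`-st powers, is invertible. -/
theorem two_group_vandermonde_coset_invertible
    (F : Type*) [Field F] [Fintype F] (G : Subgroup Fˣ) (δ : ℕ)
    (x y : Fin (δ+1) → Fˣ) (hx : Function.Injective x) (hy : Function.Injective y)
    (hxG : ∀ i, x i ∈ G) (hyG : ∀ i, y i ∈ G)
    (lam lam' : Fˣ) (hcoset : lam⁻¹ * lam' ∉ G) :
    IsUnit (Matrix.of fun p q : Fin (2*δ+2) =>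
      if hq : (q : ℕ) < δ + 1 then
        (if (p : ℕ) < δ then ((x ⟨q, hq⟩ : Fˣ) : F) ^ ((p : ℕ) + 1)
         else if (p : ℕ) < 2*δ then 0
         else if (p : ℕ) = 2*δ then ((lam : Fˣ) : F)
         else ((x ⟨q, hq⟩ : Fˣ) : F) ^ (δ + 1))
      else
        (if (p : ℕ) < δ then 0
         else if (p : ℕ) < 2*δ then
           ((y ⟨(q : ℕ) - (δ+1), by have := q.isLt; omega⟩ : Fˣ) : F) ^ ((p : ℕ) - δ + 1)
         else if (p : ℕ) = 2*δ then ((lam' : Fˣ) : F)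
         else ((y ⟨(q : ℕ) - (δ+1), by have := q.isLt; omega⟩ : Fˣ) : F) ^ (δ + 1))).det := by
  classical
  by_contra hdet
  rw [isUnit_iff_ne_zero, not_not] at hdet
  obtain ⟨v, hv0, hvM⟩ := Matrix.exists_vecMul_eq_zero_iff.mpr hdet
  obtain ⟨l2, hl2⟩ : ∃ l : Fin (2*δ+2), l = ⟨2*δ, by omega⟩ := ⟨_, rfl⟩
  obtain ⟨l3, hl3⟩ : ∃ l : Fin (2*δ+2), l = ⟨2*δ+1, by omega⟩ := ⟨_, rfl⟩
  obtain ⟨c, hc⟩ : ∃ c : ℕ → F, c = fun p => if h : p < δ then v ⟨p, by omega⟩ else 0 := ⟨_, rfl⟩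
  obtain ⟨d, hd⟩ : ∃ d : ℕ → F, d = fun p => if h : p < δ then v ⟨δ+p, by omega⟩ else 0 := ⟨_, rfl⟩
  -- the two column equations
  have hcol1 : ∀ i : Fin (δ+1),
      v l2 * lam + (∑ p ∈ range δ, c p * ((x i : Fˣ) : F)^(p+1))
        + v l3 * ((x i : Fˣ) : F)^(δ+1) = 0 := by
    intro i
    have h0 := congrFun hvM ⟨(i : ℕ), by omega⟩
    simp only [Matrix.vecMul, dotProduct, Pi.zero_apply, Matrix.of_apply] at h0
    obtain ⟨g, hg⟩ : ∃ g : ℕ → F, g = fun m => if h : m < 2*δ+2 then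
      v ⟨m, h⟩ * (if m < δ then ((x i : Fˣ) : F)^(m+1)
        else if m < 2*δ then 0
        else if m = 2*δ then ((lam : Fˣ) : F)
        else ((x i : Fˣ) : F)^(δ+1)) else 0 := ⟨_, rfl⟩
    have h0' : ∑ p : Fin (2*δ+2), g (p : ℕ) = 0 := by
      rw [← h0]
      refine Finset.sum_congr rfl fun p _ => ?_
      simp [hg, p.isLt, i.isLt]
    rw [sum_split δ g] at h0'
    have e1 : ∑ p ∈ range δ, g p = ∑ p ∈ range δ, c p * ((x i : Fˣ) : F)^(p+1) := by
      refine Finset.sum_congr rfl fun p hp => ?_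
      simp only [Finset.mem_range] at hp
      simp [hg, hc, hp, show p < 2*δ+2 by omega]
    have e2 : ∑ p ∈ range δ, g (δ+p) = 0 := by
      refine Finset.sum_eq_zero fun p hp => ?_
      simp only [Finset.mem_range] at hp
      simp [hg, show ¬(δ+p < δ) by omega, show δ+p < 2*δ by omega, show δ+p < 2*δ+2 by omega]
    have e3 : g (2*δ) = v l2 * ((lam : Fˣ) : F) := by
      simp [hg, hl2, show ¬(2*δ < δ) by omega, show ¬(2*δ < 2*δ) by omega,
        show 2*δ < 2*δ+2 by omega]
    have e4 : g (2*δ+1) = v l3 * ((x i : Fˣ) : F)^(δ+1) := by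
      simp [hg, hl3, show ¬(2*δ+1 < δ) by omega, show ¬(2*δ+1 < 2*δ) by omega,
        show ¬(2*δ+1 = 2*δ) by omega, show 2*δ+1 < 2*δ+2 by omega]
    rw [e1, e2, e3, e4] at h0'
    linear_combination h0'
  have hcol2 : ∀ i : Fin (δ+1),
      v l2 * lam' + (∑ p ∈ range δ, d p * ((y i : Fˣ) : F)^(p+1))
        + v l3 * ((y i : Fˣ) : F)^(δ+1) = 0 := by
    intro i
    have h0 := congrFun hvM ⟨δ+1+(i : ℕ), by omega⟩
    simp only [Matrix.vecMul, dotProduct, Pi.zero_apply, Matrix.of_apply] at h0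
    obtain ⟨g, hg⟩ : ∃ g : ℕ → F, g = fun m => if h : m < 2*δ+2 then
      v ⟨m, h⟩ * (if m < δ then 0
        else if m < 2*δ then ((y i : Fˣ) : F)^(m-δ+1)
        else if m = 2*δ then ((lam' : Fˣ) : F)
        else ((y i : Fˣ) : F)^(δ+1)) else 0 := ⟨_, rfl⟩
    have h0' : ∑ p : Fin (2*δ+2), g (p : ℕ) = 0 := by
      rw [← h0]
      refine Finset.sum_congr rfl fun p _ => ?_
      simp [hg, p.isLt, show ¬(δ+1+(i:ℕ) < δ+1) by omega, Nat.add_sub_cancel_left]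
    rw [sum_split δ g] at h0'
    have e1 : ∑ p ∈ range δ, g p = 0 := by
      refine Finset.sum_eq_zero fun p hp => ?_
      simp only [Finset.mem_range] at hp
      simp [hg, hp, show p < 2*δ+2 by omega]
    have e2 : ∑ p ∈ range δ, g (δ+p) = ∑ p ∈ range δ, d p * ((y i : Fˣ) : F)^(p+1) := by
      refine Finset.sum_congr rfl fun p hp => ?_
      simp only [Finset.mem_range] at hp
      simp [hg, hd, hp, show ¬(δ+p < δ) by omega, show δ+p < 2*δ by omega,
        show δ+p < 2*δ+2 by omega, Nat.add_sub_cancel_left]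
    have e3 : g (2*δ) = v l2 * ((lam' : Fˣ) : F) := by
      simp [hg, hl2, show ¬(2*δ < δ) by omega, show ¬(2*δ < 2*δ) by omega,
        show 2*δ < 2*δ+2 by omega]
    have e4 : g (2*δ+1) = v l3 * ((y i : Fˣ) : F)^(δ+1) := by
      simp [hg, hl3, show ¬(2*δ+1 < δ) by omega, show ¬(2*δ+1 < 2*δ) by omega,
        show ¬(2*δ+1 = 2*δ) by omega, show 2*δ+1 < 2*δ+2 by omega]
    rw [e1, e2, e3, e4] at h0'
    linear_combination h0'
  -- package as polynomial evaluations and factor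
  have hxinj : Function.Injective (fun i => ((x i : Fˣ) : F)) :=
    fun a b h => hx (Units.ext h)
  have hyinj : Function.Injective (fun i => ((y i : Fˣ) : F)) :=
    fun a b h => hy (Units.ext h)
  have hPfac := key δ _ hxinj c (v l2 * lam) (v l3) (fun i => by
    simp only [eval_add, eval_mul, eval_pow, eval_C, eval_X, eval_finset_sum]
    exact hcol1 i)
  have hQfac := key δ _ hyinj d (v l2 * lam') (v l3) (fun i => by
    simp only [eval_add, eval_mul, eval_pow, eval_C, eval_X, eval_finset_sum]
    exact hcol2 i)
  by_cases hc3 : v l3 = 0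
  · -- all coefficients vanish, contradicting v ≠ 0
    have hP0 : (C (v l2 * lam) + ∑ p ∈ range δ, C (c p) * X^(p+1)
        + C (v l3) * X^(δ+1) : F[X]) = 0 := by
      rw [hPfac, hc3]; simp
    have hQ0 : (C (v l2 * lam') + ∑ p ∈ range δ, C (d p) * X^(p+1)
        + C (v l3) * X^(δ+1) : F[X]) = 0 := by
      rw [hQfac, hc3]; simp
    have h2 : v l2 = 0 := by
      have := coeff_P_zero δ c (v l2 * lam) (v l3)
      rw [hP0] at this
      simp only [coeff_zero] at this
      rcases mul_eq_zero.mp this.symm with h | h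
      · exact h
      · exact absurd h (Units.ne_zero lam)
    have hcp : ∀ k, k < δ → c k = 0 := fun k hk => by
      have := coeff_P_succ δ c (v l2 * lam) (v l3) hk
      rw [hP0] at this; simpa using this.symm
    have hdp : ∀ k, k < δ → d k = 0 := fun k hk => by
      have := coeff_P_succ δ d (v l2 * lam') (v l3) hk
      rw [hQ0] at this; simpa using this.symm
    apply hv0
    funext p
    rcases lt_or_ge (p : ℕ) δ with h | h
    · have := hcp p h
      rw [hc] at this
      simp only [dif_pos h] at this
      rwa [show (⟨(p:ℕ), by omega⟩ : Fin (2*δ+2)) = p from Fin.ext rfl] at this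
    · rcases lt_or_ge (p : ℕ) (2*δ) with h' | h'
      · have := hdp ((p:ℕ) - δ) (by omega)
        rw [hd] at this
        simp only [dif_pos (show (p:ℕ) - δ < δ by omega)] at this
        rwa [show (⟨δ + ((p:ℕ) - δ), by omega⟩ : Fin (2*δ+2)) = p from Fin.ext (by simp; omega)]
          at this
      · rcases eq_or_lt_of_le h' with h'' | h''
        · rwa [show p = l2 from Fin.ext (by simp [hl2]; omega)]
        · have : p = l3 := Fin.ext (by have := p.isLt; simp [hl3]; omega)
          rw [this]; exact hc3
  · -- constant-coefficient comparison gives a coset contradiction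
    have hconst : ∀ (P : F[X]) (z : Fin (δ+1) → F), P = C (v l3) * ∏ i, (X - C (z i)) →
        P.coeff 0 = v l3 * ∏ i, (0 - z i) := by
      intro P z hPz
      rw [hPz, Polynomial.coeff_zero_eq_eval_zero]
      simp [eval_prod]
    have h1 : v l2 * ((lam : Fˣ) : F) = v l3 * ∏ i, (0 - ((x i : Fˣ) : F)) := by
      have := hconst _ _ hPfac
      rwa [coeff_P_zero] at this
    have h2 : v l2 * ((lam' : Fˣ) : F) = v l3 * ∏ i, (0 - ((y i : Fˣ) : F)) := by
      have := hconst _ _ hQfac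
      rwa [coeff_P_zero] at this
    obtain ⟨xu, hxu⟩ : ∃ u : Fˣ, u = ∏ i, x i := ⟨_, rfl⟩
    obtain ⟨yu, hyu⟩ : ∃ u : Fˣ, u = ∏ i, y i := ⟨_, rfl⟩
    have hneg : ∀ w : Fin (δ+1) → Fˣ, ∏ i, (0 - ((w i : Fˣ) : F))
        = (-1)^(δ+1) * ((∏ i, w i : Fˣ) : F) := by
      intro w
      rw [show ((∏ i, w i : Fˣ) : F) = ∏ i, ((w i : Fˣ) : F) from
        map_prod (Units.coeHom F) w Finset.univ]
      calc ∏ i, (0 - ((w i : Fˣ) : F)) = ∏ i, ((-1) * ((w i : Fˣ) : F)) :=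
            Finset.prod_congr rfl fun i _ => by ring
        _ = (∏ _i : Fin (δ+1), (-1:F)) * ∏ i, ((w i : Fˣ) : F) := Finset.prod_mul_distrib
        _ = (-1)^(δ+1) * ∏ i, ((w i : Fˣ) : F) := by simp
    have hxuc := hneg x
    have hyuc := hneg y
    rw [← hxu] at hxuc
    rw [← hyu] at hyuc
    rw [hxuc] at h1
    rw [hyuc] at h2
    have hvl2 : v l2 ≠ 0 := by
      intro h
      rw [h, zero_mul] at h1
      exact (mul_ne_zero hc3 (mul_ne_zero (pow_ne_zero _ (by norm_num)) (Units.ne_zero xu)))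
        h1.symm
    have hfield : ((lam : Fˣ) : F) * ((yu : Fˣ) : F) = ((lam' : Fˣ) : F) * ((xu : Fˣ) : F) := by
      have h3 : v l2 * (((lam:Fˣ):F) * ((yu:Fˣ):F)) = v l2 * (((lam':Fˣ):F) * ((xu:Fˣ):F)) := by
        linear_combination ((yu:Fˣ):F) * h1 - ((xu:Fˣ):F) * h2
      exact mul_left_cancel₀ hvl2 h3
    have hu : lam⁻¹ * lam' = yu * xu⁻¹ := by
      apply Units.ext
      rw [Units.val_mul, Units.val_mul, Units.val_inv_eq_inv_val, Units.val_inv_eq_inv_val]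
      have hl0 : ((lam:Fˣ):F) ≠ 0 := Units.ne_zero _
      have hx0 : ((xu:Fˣ):F) ≠ 0 := Units.ne_zero _
      field_simp
      linear_combination -hfield
    refine hcoset (hu ▸ mul_mem ?_ (inv_mem ?_))
    · exact hyu ▸ prod_mem fun i _ => hyG i
    · exact hxu ▸ prod_mem fun i _ => hxG i
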